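/- Let λ0, λ1 > 0, ℓ0, ℓ1 ∈ ℝ and h0, h1 > 0, and set λ = (λ0+λ1)/2, μ = (λ0−λ1)/2, ℓ = (ℓ0+ℓ1)/2, m = (ℓ0−ℓ1)/2, D = √((m+μ)² + λ0 λ1 h0 h1) > 0. Define L0(t) = ½ e^{−(λ+ℓ)t} [ e^{tD} + e^{−tD} + ((λ0 h0 − μ − m)/D)(e^{tD} − e^{−tD}) ] and L1(t) = ½ e^{−(λ+ℓ)t} [ e^{tD} + e^{−tD} + ((λ1 h1 + μ + m)/D)(e^{tD} − e^{−tD}) ]. Then for all t ≥ 0: L0(t) = e^{−(λ0+ℓ0)t} + λ0 h0 ∫_0^t e^{−(λ0+ℓ0)τ} L1(t−τ) dτ and L1(t) = e^{−(λ1+ℓ1)t} + λ1 h1 ∫_0^t e^{−(λ1+ℓ1)τ} L0(t−τ) dτ. -/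

import Mathlib

open intervalIntegral

lemma myexp_int (b t : ℝ) (hb : b ≠ 0) :
    ∫ τ in (0:ℝ)..t, Real.exp (b * τ) = (Real.exp (b * t) - 1) / b := by
  have h : ∀ τ ∈ Set.uIcc (0:ℝ) t,
      HasDerivAt (fun x => Real.exp (b * x) / b) (Real.exp (b * τ)) τ := by
    intro τ _
    have h1 : HasDerivAt (fun x : ℝ => b * x) b τ := by
      simpa using (hasDerivAt_id τ).const_mul b
    have := (h1.exp).div_const b
    simpa [mul_div_assoc, mul_comm, mul_div_cancel_left₀ _ hb] using this
  have hint : IntervalIntegrable (fun τ => Real.exp (b * τ)) MeasureTheory.volume 0 t :=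
    (Real.continuous_exp.comp (continuous_const.mul continuous_id)).intervalIntegrable 0 t
  have := intervalIntegral.integral_eq_sub_of_hasDerivAt h hint
  simp at this
  rw [this]; ring

lemma myalg (P q s D x u g z v1 v2 : ℝ) (hD : D ≠ 0)
    (h1 : s + D ≠ 0) (h2 : D - s ≠ 0)
    (hv1 : x * u * v1 = z) (hv2 : x * g * v2 = z)
    (hrel : D ^ 2 = s ^ 2 + P * q) :
    (1/2) * x * (u + g + ((P - s)/D) * (u - g))
      = z + P * ( ((1/2)*(1 + (q+s)/D) * (x*u)) * ((v1 - 1)/(-(s+D)))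
                + ((1/2)*(1 - (q+s)/D) * (x*g)) * ((v2 - 1)/(D - s))) := by
  have w1 : ((1/2)*(1 + (q+s)/D) * (x*u)) * ((v1 - 1)/(-(s+D)))
      = -((1/2)*(1 + (q+s)/D) * (z - x*u) / (s+D)) := by
    rw [div_neg, ← hv1]; ring
  have w2 : ((1/2)*(1 - (q+s)/D) * (x*g)) * ((v2 - 1)/(D - s))
      = (1/2)*(1 - (q+s)/D) * (z - x*g) / (D - s) := by
    rw [← hv2]; ring
  have hc1 : P * ((1/2)*(1 + (q+s)/D)) / (s+D) = (1/2)*(1 + (P-s)/D) := by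
    field_simp
    linear_combination (-1)*hrel
  have hc2 : P * ((1/2)*(1 - (q+s)/D)) / (D-s) = -((1/2)*(1 - (P-s)/D)) := by
    field_simp
    linear_combination hrel
  rw [w1, w2]
  linear_combination (z - x*u) * hc1 + (-(z - x*g)) * hc2

lemma volterra_aux (P q k s D : ℝ) (hPq : 0 < P * q) (hDpos : 0 < D)
    (hD2 : D ^ 2 = s ^ 2 + P * q)
    (M L : ℝ → ℝ)
    (hM : ∀ t, M t = (1/2) * Real.exp (-k*t) *
        (Real.exp (t*D) + Real.exp (-(t*D))
          + ((q+s)/D) * (Real.exp (t*D) - Real.exp (-(t*D)))))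
    (hL : ∀ t, L t = (1/2) * Real.exp (-k*t) *
        (Real.exp (t*D) + Real.exp (-(t*D))
          + ((P-s)/D) * (Real.exp (t*D) - Real.exp (-(t*D)))))
    (t : ℝ) :
    L t = Real.exp (-(k+s)*t) + P * ∫ τ in (0:ℝ)..t, Real.exp (-(k+s)*τ) * M (t-τ) := by
  have hD : D ≠ 0 := hDpos.ne'
  have hlt : s < D := by nlinarith
  have hgt : -D < s := by nlinarith
  have h1 : s + D ≠ 0 := by intro h; linarith
  have h2 : D - s ≠ 0 := by intro h; linarith
  have hb1 : -(s+D) ≠ 0 := neg_ne_zero.mpr h1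
  set C1 : ℝ := (1/2)*(1 + (q+s)/D) * (Real.exp (-k*t) * Real.exp (t*D)) with hC1
  set C2 : ℝ := (1/2)*(1 - (q+s)/D) * (Real.exp (-k*t) * Real.exp (-(t*D))) with hC2
  have hpt : ∀ τ : ℝ, Real.exp (-(k+s)*τ) * M (t-τ)
      = C1 * Real.exp (-(s+D)*τ) + C2 * Real.exp ((D-s)*τ) := by
    intro τ
    have lhs_eq : Real.exp (-(k+s)*τ) * M (t-τ)
        = (1/2)*(1+(q+s)/D) * Real.exp (-(k+s)*τ + -k*(t-τ) + (t-τ)*D)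
        + (1/2)*(1-(q+s)/D) * Real.exp (-(k+s)*τ + -k*(t-τ) + -((t-τ)*D)) := by
      rw [hM, Real.exp_add, Real.exp_add, Real.exp_add, Real.exp_add]; ring
    have rhs_eq : C1 * Real.exp (-(s+D)*τ) + C2 * Real.exp ((D-s)*τ)
        = (1/2)*(1+(q+s)/D) * Real.exp (-k*t + t*D + -(s+D)*τ)
        + (1/2)*(1-(q+s)/D) * Real.exp (-k*t + -(t*D) + (D-s)*τ) := by
      rw [hC1, hC2, Real.exp_add, Real.exp_add, Real.exp_add, Real.exp_add]; ring
    rw [lhs_eq, rhs_eq,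
      show -(k+s)*τ + -k*(t-τ) + (t-τ)*D = -k*t + t*D + -(s+D)*τ by ring,
      show -(k+s)*τ + -k*(t-τ) + -((t-τ)*D) = -k*t + -(t*D) + (D-s)*τ by ring]
  have hi : (∫ τ in (0:ℝ)..t, Real.exp (-(k+s)*τ) * M (t-τ))
      = C1 * ((Real.exp (-(s+D)*t) - 1)/(-(s+D))) + C2 * ((Real.exp ((D-s)*t) - 1)/(D-s)) := by
    rw [intervalIntegral.integral_congr
      (g := fun τ => C1 * Real.exp (-(s+D)*τ) + C2 * Real.exp ((D-s)*τ)) (fun τ _ => hpt τ)]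
    rw [intervalIntegral.integral_add
        ((by fun_prop : Continuous fun τ : ℝ => C1 * Real.exp (-(s+D)*τ)).intervalIntegrable 0 t)
        ((by fun_prop : Continuous fun τ : ℝ => C2 * Real.exp ((D-s)*τ)).intervalIntegrable 0 t),
      intervalIntegral.integral_const_mul, intervalIntegral.integral_const_mul,
      myexp_int _ t hb1, myexp_int _ t h2]
  rw [hL t, hi]
  have hv1 : Real.exp (-k*t) * Real.exp (t*D) * Real.exp (-(s+D)*t) = Real.exp (-(k+s)*t) := by
    rw [← Real.exp_add, ← Real.exp_add]; congr 1; ring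
  have hv2 : Real.exp (-k*t) * Real.exp (-(t*D)) * Real.exp ((D-s)*t) = Real.exp (-(k+s)*t) := by
    rw [← Real.exp_add, ← Real.exp_add]; congr 1; ring
  exact myalg P q s D (Real.exp (-k*t)) (Real.exp (t*D)) (Real.exp (-(t*D)))
    (Real.exp (-(k+s)*t)) (Real.exp (-(s+D)*t)) (Real.exp ((D-s)*t)) hD h1 h2 hv1 hv2 hD2


/-- Formulae (3.2)–(3.3) of Theorem 3.1 solve the coupled Volterra integral
equations (3.5) characterizing the Laplace transform of a Kac–Lévy process
with jumps. -/
theorem kac_levy_jump_volterra_solution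
    (l0 l1 e0 e1 h0 h1 : ℝ) (hl0 : 0 < l0) (hl1 : 0 < l1)
    (hh0 : 0 < h0) (hh1 : 0 < h1)
    (lam μ e m D : ℝ)
    (hlam : lam = (l0 + l1) / 2) (hμ : μ = (l0 - l1) / 2)
    (he : e = (e0 + e1) / 2) (hm : m = (e0 - e1) / 2)
    (hD : D = Real.sqrt ((m + μ) ^ 2 + l0 * l1 * h0 * h1)) (hDpos : 0 < D)
    (L0 L1 : ℝ → ℝ)
    (hL0 : ∀ t, L0 t = (1 / 2) * Real.exp (-(lam + e) * t) *
        (Real.exp (t * D) + Real.exp (-(t * D))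
          + ((l0 * h0 - μ - m) / D) * (Real.exp (t * D) - Real.exp (-(t * D)))))
    (hL1 : ∀ t, L1 t = (1 / 2) * Real.exp (-(lam + e) * t) *
        (Real.exp (t * D) + Real.exp (-(t * D))
          + ((l1 * h1 + μ + m) / D) * (Real.exp (t * D) - Real.exp (-(t * D))))) :
    ∀ t : ℝ, 0 ≤ t →
      (L0 t = Real.exp (-(l0 + e0) * t)
        + l0 * h0 * ∫ τ in (0:ℝ)..t, Real.exp (-(l0 + e0) * τ) * L1 (t - τ)) ∧
      (L1 t = Real.exp (-(l1 + e1) * t)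
        + l1 * h1 * ∫ τ in (0:ℝ)..t, Real.exp (-(l1 + e1) * τ) * L0 (t - τ)) := by
  intro t _
  have hsq : (0:ℝ) ≤ (m + μ) ^ 2 + l0 * l1 * h0 * h1 := by positivity
  have hD2 : D ^ 2 = (m + μ) ^ 2 + l0 * l1 * h0 * h1 := by
    rw [hD, Real.sq_sqrt hsq]
  constructor
  · have key := volterra_aux (l0*h0) (l1*h1) (lam+e) (μ+m) D (by positivity) hDpos
      (by linear_combination hD2) L1 L0
      (fun s => (hL1 s).trans (by ring))
      (fun s => (hL0 s).trans (by ring)) t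
    rwa [show (lam+e)+(μ+m) = l0+e0 by rw [hlam, hμ, he, hm]; ring] at key
  · have key := volterra_aux (l1*h1) (l0*h0) (lam+e) (-(μ+m)) D (by positivity) hDpos
      (by linear_combination hD2) L0 L1
      (fun s => (hL0 s).trans (by ring))
      (fun s => (hL1 s).trans (by ring)) t
    rwa [show (lam+e)+(-(μ+m)) = l1+e1 by rw [hlam, hμ, he, hm]; ring] at key
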